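/- Let 𝒜 be the set of sequences a = (a_n) of positive reals with a_n → ∞, and for a ∈ 𝒜 let S(a) = ⋃_n (-a_n, a_n)·e_n ⊆ ℝ^(ℕ). For any sequence S = (S(a_k))_{k∈ω}, define U(S) = ⋃_k (S(a_0)+⋯+S(a_k)). Then the family 𝒩 of all such sets U(S) satisfies: for every U(S) ∈ 𝒩 there is U(S') ∈ 𝒩 with U(S') + U(S') ⊆ U(S). -/

import Mathlib

open Filter Pointwise

/-- `a ∈ 𝒜`: a sequence of positive reals tending to `∞`. -/
def memA (a : ℕ → ℝ) : Prop := (∀ n, 0 < a n) ∧ Tendsto a atTop atTop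

/-- `S(a) = ⋃ n, (-a_n, a_n)·e_n ⊆ ℝ^(ℕ)`. -/
def Sset (a : ℕ → ℝ) : Set (ℕ →₀ ℝ) :=
  ⋃ n : ℕ, {x : ℕ →₀ ℝ | ∃ t : ℝ, |t| < a n ∧ x = Finsupp.single n t}

/-- `U(S) = ⋃ k, (S(a_0) + ⋯ + S(a_k))` (Minkowski sums). -/
def Uset (a : ℕ → ℕ → ℝ) : Set (ℕ →₀ ℝ) :=
  ⋃ k : ℕ, ∑ j ∈ Finset.range (k + 1), Sset (a j)

lemma zero_mem_Sset {a : ℕ → ℝ} (h : ∀ n, 0 < a n) : (0 : ℕ →₀ ℝ) ∈ Sset a := by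
  refine Set.mem_iUnion.2 ⟨0, 0, by simpa using h 0, by simp⟩

lemma Sset_mono {a b : ℕ → ℝ} (h : ∀ n, a n ≤ b n) : Sset a ⊆ Sset b := by
  intro x hx
  obtain ⟨n, t, ht, hxt⟩ := Set.mem_iUnion.1 hx
  exact Set.mem_iUnion.2 ⟨n, t, lt_of_lt_of_le ht (h n), hxt⟩

lemma sum_sets_mono {s : Finset ℕ} {S T : ℕ → Set (ℕ →₀ ℝ)} (h : ∀ i ∈ s, S i ⊆ T i) :
    ∑ i ∈ s, S i ⊆ ∑ i ∈ s, T i := by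
  induction s using Finset.induction_on with
  | empty => simp
  | @insert i s hns ih =>
    
    rw [Finset.sum_insert hns, Finset.sum_insert hns]
    exact Set.add_subset_add (h i (Finset.mem_insert_self i s))
      (ih fun j hj => h j (Finset.mem_insert_of_mem hj))

lemma sum_sets_subset_of_subset {F G : Finset ℕ} {T : ℕ → Set (ℕ →₀ ℝ)} (hFG : F ⊆ G)
    (h0 : ∀ i, (0 : ℕ →₀ ℝ) ∈ T i) : ∑ i ∈ F, T i ⊆ ∑ i ∈ G, T i := by
  classical
  have : G = F ∪ (G \ F) := by rw [Finset.union_sdiff_of_subset hFG]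
  rw [this, Finset.sum_union (Finset.disjoint_sdiff)]
  intro x hx
  have h0' : (0 : ℕ →₀ ℝ) ∈ ∑ i ∈ G \ F, T i := by
    induction (G \ F) using Finset.induction_on with
    | empty => simp
    | @insert i s hns ih =>
      
      rw [Finset.sum_insert hns]
      simpa using Set.add_mem_add (h0 i) ih
  simpa using Set.add_mem_add hx h0'

/-- for every `U(S)` in the family `𝒩` there is `U(S')` in `𝒩` with
`U(S') + U(S') ⊆ U(S)`. -/
theorem stmt6 (a : ℕ → ℕ → ℝ) (ha : ∀ k, memA (a k)) :
    ∃ a' : ℕ → ℕ → ℝ, (∀ k, memA (a' k)) ∧ Uset a' + Uset a' ⊆ Uset a := by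
  refine ⟨fun k n => min (a (2 * k) n) (a (2 * k + 1) n), ?_, ?_⟩
  · intro k
    refine ⟨fun n => lt_min ((ha _).1 n) ((ha _).1 n), ?_⟩
    rw [tendsto_atTop]
    intro b
    filter_upwards [tendsto_atTop.1 (ha (2 * k)).2 b,
      tendsto_atTop.1 (ha (2 * k + 1)).2 b] with n h1 h2
    exact le_min h1 h2
  · rintro x ⟨y, hy, z, hz, rfl⟩
    obtain ⟨k, hk⟩ := Set.mem_iUnion.1 hy
    obtain ⟨k', hk'⟩ := Set.mem_iUnion.1 hz
    have hy2 : y ∈ ∑ j ∈ Finset.range (k + 1), Sset (a (2 * j)) :=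
      sum_sets_mono (fun j _ => Sset_mono fun n => min_le_left _ _) hk
    have hz2 : z ∈ ∑ j ∈ Finset.range (k' + 1), Sset (a (2 * j + 1)) :=
      sum_sets_mono (fun j _ => Sset_mono fun n => min_le_right _ _) hk'
    set F1 : Finset ℕ := (Finset.range (k + 1)).image (fun j => 2 * j) with hF1
    set F2 : Finset ℕ := (Finset.range (k' + 1)).image (fun j => 2 * j + 1) with hF2
    have e1 : ∑ j ∈ Finset.range (k + 1), Sset (a (2 * j)) = ∑ i ∈ F1, Sset (a i) :=
      (Finset.sum_image (g := fun j => 2 * j) (f := fun i => Sset (a i))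
        (by intro u _ v _ h; simp only [] at h; omega)).symm
    have e2 : ∑ j ∈ Finset.range (k' + 1), Sset (a (2 * j + 1)) = ∑ i ∈ F2, Sset (a i) :=
      (Finset.sum_image (g := fun j => 2 * j + 1) (f := fun i => Sset (a i))
        (by intro u _ v _ h; simp only [] at h; omega)).symm
    have hdisj : Disjoint F1 F2 := by
      rw [Finset.disjoint_left]
      rintro i hi1 hi2
      simp only [hF1, hF2, Finset.mem_image, Finset.mem_range] at hi1 hi2
      obtain ⟨j1, _, rfl⟩ := hi1
      obtain ⟨j2, _, h⟩ := hi2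
      omega
    have hmem : y + z ∈ ∑ i ∈ F1 ∪ F2, Sset (a i) := by
      rw [Finset.sum_union hdisj]
      exact Set.add_mem_add (e1 ▸ hy2) (e2 ▸ hz2)
    refine Set.mem_iUnion.2 ⟨2 * max k k' + 1, ?_⟩
    refine sum_sets_subset_of_subset ?_ (fun i => zero_mem_Sset (ha i).1) hmem
    intro i hi
    simp only [hF1, hF2, Finset.mem_union, Finset.mem_image, Finset.mem_range] at hi
    rw [Finset.mem_range]
    rcases hi with ⟨j, hj, rfl⟩ | ⟨j, hj, rfl⟩ <;> omega
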